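/- For any two probability measures $P$ and $Q$ on a common measurable space and any measurable event $A$, it holds that $P(A) + Q(A^c) \ge \tfrac{1}{2} \exp(-D_{KL}(P \| Q))$, where $D_{KL}$ denotes the Kullback–Leibler divergence. -/

import Mathlib

open MeasureTheory ENNReal

/-- KL divergence of `P` w.r.t. `Q`: `∫ log (dP/dQ) dP` when `P ≪ Q` (and the
integral makes sense), `∞` otherwise. -/
noncomputable def klDiv {Ω : Type*} [MeasurableSpace Ω] (P Q : Measure Ω) : ℝ≥0∞ :=
  open Classical in
  if P ≪ Q ∧ Integrable (llr P Q) P then ENNReal.ofReal (∫ x, llr P Q x ∂P) else ⊤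

/-- `exp(-k)` for `k : ℝ≥0∞`, with `exp(-∞) = 0`. -/
noncomputable def expNeg (k : ℝ≥0∞) : ℝ :=
  if k = ⊤ then 0 else Real.exp (-k.toReal)

lemma aux_sqrt_mul_self_exp (t : ℝ) (ht : 0 ≤ t) :
    t * Real.exp (-Real.log t / 2) = Real.sqrt t := by
  rcases eq_or_lt_of_le ht with h | h
  · simp [← h]
  · rw [Real.sqrt_eq_rpow, Real.rpow_def_of_pos h]
    nth_rewrite 1 [← Real.exp_log h]
    rw [← Real.exp_add]
    congr 1; ring

lemma aux_setIntegral_sqrt_le {Ω : Type*} [MeasurableSpace Ω] (P Q : Measure Ω)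
    [IsFiniteMeasure P] [IsFiniteMeasure Q] (hac : P ≪ Q)
    (s : Set Ω) :
    ∫ x in s, Real.sqrt ((P.rnDeriv Q x).toReal) ∂Q
      ≤ Real.sqrt (P s).toReal * Real.sqrt (Q s).toReal := by
  have hmeas : Measurable fun x => P.rnDeriv Q x := Measure.measurable_rnDeriv P Q
  have h1 : ∫ x in s, Real.sqrt ((P.rnDeriv Q x).toReal) ∂Q
      = (∫⁻ x in s, (P.rnDeriv Q x) ^ (2⁻¹ : ℝ) ∂Q).toReal := by
    rw [integral_eq_lintegral_of_nonneg_ae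
      (Filter.Eventually.of_forall fun x => Real.sqrt_nonneg _)
      (hmeas.ennreal_toReal.sqrt.aestronglyMeasurable)]
    congr 1
    refine lintegral_congr_ae ?_
    filter_upwards [ae_restrict_of_ae (Measure.rnDeriv_lt_top P Q)] with x hx
    rw [Real.sqrt_eq_rpow, ← ENNReal.ofReal_rpow_of_nonneg ENNReal.toReal_nonneg (by norm_num),
      ENNReal.ofReal_toReal hx.ne]
    norm_num
  have hpq : Real.HolderConjugate 2 2 := Real.holderConjugate_iff.mpr ⟨one_lt_two, by norm_num⟩
  have e1 : ∫⁻ x in s, ((P.rnDeriv Q x) ^ (2⁻¹ : ℝ)) ^ (2 : ℝ) ∂Q = P s := by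
    rw [← Measure.setLIntegral_rnDeriv hac s]
    refine lintegral_congr fun x => ?_
    rw [← ENNReal.rpow_mul]
    norm_num
  have h2 : ∫⁻ x in s, (P.rnDeriv Q x) ^ (2⁻¹ : ℝ) ∂Q
      ≤ (P s) ^ (2⁻¹ : ℝ) * (Q s) ^ (2⁻¹ : ℝ) := by
    have := ENNReal.lintegral_mul_le_Lp_mul_Lq (Q.restrict s) hpq
      (f := fun x => (P.rnDeriv Q x) ^ (2⁻¹ : ℝ)) (g := fun _ => 1)
      (hmeas.pow_const _).aemeasurable aemeasurable_const
    simp only [Pi.mul_apply, mul_one, ENNReal.one_rpow, lintegral_one,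
      Measure.restrict_apply_univ, one_div] at this
    rwa [e1] at this
  calc ∫ x in s, Real.sqrt ((P.rnDeriv Q x).toReal) ∂Q
      = (∫⁻ x in s, (P.rnDeriv Q x) ^ (2⁻¹ : ℝ) ∂Q).toReal := h1
    _ ≤ ((P s) ^ (2⁻¹ : ℝ) * (Q s) ^ (2⁻¹ : ℝ)).toReal := by
        refine ENNReal.toReal_mono ?_ h2
        exact ENNReal.mul_ne_top (ENNReal.rpow_ne_top_of_nonneg (by norm_num) (measure_ne_top _ _))
          (ENNReal.rpow_ne_top_of_nonneg (by norm_num) (measure_ne_top _ _))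
    _ = Real.sqrt (P s).toReal * Real.sqrt (Q s).toReal := by
        rw [ENNReal.toReal_mul, ← ENNReal.toReal_rpow, ← ENNReal.toReal_rpow,
          Real.sqrt_eq_rpow, Real.sqrt_eq_rpow]
        norm_num


/-- Bretagnolle–Huber inequality. -/
theorem stmt3 {Ω : Type*} [MeasurableSpace Ω] (P Q : Measure Ω)
    [IsProbabilityMeasure P] [IsProbabilityMeasure Q]
    (A : Set Ω) (hA : MeasurableSet A) :
    (1 / 2 : ℝ) * expNeg (klDiv P Q) ≤ (P A).toReal + (Q Aᶜ).toReal := by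
  by_cases hc : P ≪ Q ∧ Integrable (llr P Q) P
  · obtain ⟨hac, hint⟩ := hc
    set f : Ω → ℝ := fun x => (P.rnDeriv Q x).toReal with hf
    set K : ℝ := ∫ x, llr P Q x ∂P with hK
    -- integrability of √f w.r.t. Q
    have hfmeas : Measurable f := (Measure.measurable_rnDeriv P Q).ennreal_toReal
    have hfint : Integrable f Q := Measure.integrable_toReal_rnDeriv
    have hsqint : Integrable (fun x => Real.sqrt (f x)) Q := by
      refine Integrable.mono' ((integrable_const (1:ℝ)).add hfint)
        hfmeas.sqrt.aestronglyMeasurable ?_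
      refine Filter.Eventually.of_forall fun x => ?_
      have h0 : (0:ℝ) ≤ f x := ENNReal.toReal_nonneg
      have hs := Real.sqrt_nonneg (f x)
      have hsq := Real.sq_sqrt h0
      rw [Real.norm_eq_abs, abs_of_nonneg hs]
      simp only [Pi.add_apply]
      nlinarith
    -- transfer: ∫ exp(-llr/2) dP = ∫ √f dQ
    have hptwise : ∀ x, f x • Real.exp (-llr P Q x / 2) = Real.sqrt (f x) := fun x =>
      aux_sqrt_mul_self_exp (f x) ENNReal.toReal_nonneg
    have htrans : ∫ x, Real.exp (-llr P Q x / 2) ∂P = ∫ x, Real.sqrt (f x) ∂Q := by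
      rw [← integral_rnDeriv_smul hac]
      exact integral_congr_ae (Filter.Eventually.of_forall hptwise)
    have hexpint : Integrable (fun x => Real.exp (-llr P Q x / 2)) P := by
      refine (integrable_rnDeriv_smul_iff hac).mp ?_
      exact hsqint.congr (Filter.Eventually.of_forall fun x => (hptwise x).symm)
    -- Jensen
    have hjensen : Real.exp (∫ x, (-llr P Q x / 2) ∂P) ≤ ∫ x, Real.exp (-llr P Q x / 2) ∂P := by
      refine convexOn_exp.map_integral_le Real.continuous_exp.continuousOn isClosed_univ
        (Filter.Eventually.of_forall fun x => Set.mem_univ _) ((hint.neg).div_const 2) ?_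
      exact hexpint
    have hKint : ∫ x, (-llr P Q x / 2) ∂P = -K / 2 := by
      rw [integral_div, integral_neg]
    -- Cauchy–Schwarz on each set
    set a := (P A).toReal
    set b := (Q A).toReal
    set c := (P Aᶜ).toReal
    set d := (Q Aᶜ).toReal
    have hS : ∫ x, Real.sqrt (f x) ∂Q
        = (∫ x in A, Real.sqrt (f x) ∂Q) + ∫ x in Aᶜ, Real.sqrt (f x) ∂Q :=
      (integral_add_compl hA hsqint).symm
    have h1 : ∫ x in A, Real.sqrt (f x) ∂Q ≤ Real.sqrt a * Real.sqrt b :=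
      aux_setIntegral_sqrt_le P Q hac A
    have h2 : ∫ x in Aᶜ, Real.sqrt (f x) ∂Q ≤ Real.sqrt c * Real.sqrt d :=
      aux_setIntegral_sqrt_le P Q hac Aᶜ
    have ha : 0 ≤ a := ENNReal.toReal_nonneg
    have hb : 0 ≤ b := ENNReal.toReal_nonneg
    have hcc : 0 ≤ c := ENNReal.toReal_nonneg
    have hd : 0 ≤ d := ENNReal.toReal_nonneg
    have hb1 : b ≤ 1 := by
      have := ENNReal.toReal_mono one_ne_top (prob_le_one (μ := Q) (s := A))
      simpa using this
    have hc1 : c ≤ 1 := by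
      have := ENNReal.toReal_mono one_ne_top (prob_le_one (μ := P) (s := Aᶜ))
      simpa using this
    -- core inequality
    have hcore : Real.exp (-K) ≤ 2 * (a + d) := by
      have hS_le : ∫ x, Real.sqrt (f x) ∂Q ≤ Real.sqrt a * Real.sqrt b
          + Real.sqrt c * Real.sqrt d := by rw [hS]; exact add_le_add h1 h2
      have hexp_le : Real.exp (-K / 2) ≤ Real.sqrt a * Real.sqrt b
          + Real.sqrt c * Real.sqrt d := by
        calc Real.exp (-K / 2) = Real.exp (∫ x, (-llr P Q x / 2) ∂P) := by rw [hKint]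
          _ ≤ ∫ x, Real.exp (-llr P Q x / 2) ∂P := hjensen
          _ = ∫ x, Real.sqrt (f x) ∂Q := htrans
          _ ≤ _ := hS_le
      have hsq : Real.exp (-K) = Real.exp (-K / 2) ^ 2 := by
        rw [sq, ← Real.exp_add]; congr 1; ring
      have hpos : (0:ℝ) ≤ Real.exp (-K / 2) := (Real.exp_pos _).le
      have hsum : Real.exp (-K) ≤ (Real.sqrt a * Real.sqrt b + Real.sqrt c * Real.sqrt d) ^ 2 := by
        rw [hsq]
        exact pow_le_pow_left₀ hpos hexp_le 2
      have key : (Real.sqrt a * Real.sqrt b + Real.sqrt c * Real.sqrt d) ^ 2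
          ≤ (a + d) * (b + c) := by
        have sa := Real.sq_sqrt ha
        have sb := Real.sq_sqrt hb
        have sc := Real.sq_sqrt hcc
        have sd := Real.sq_sqrt hd
        nlinarith [sq_nonneg (Real.sqrt a * Real.sqrt c - Real.sqrt b * Real.sqrt d),
          Real.sqrt_nonneg a, Real.sqrt_nonneg b, Real.sqrt_nonneg c, Real.sqrt_nonneg d,
          mul_nonneg (Real.sqrt_nonneg a) (Real.sqrt_nonneg b),
          mul_nonneg (Real.sqrt_nonneg c) (Real.sqrt_nonneg d)]
      have last : (a + d) * (b + c) ≤ 2 * (a + d) := by nlinarith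
      linarith
    -- conclude
    have hkl : klDiv P Q = ENNReal.ofReal K := by rw [klDiv, if_pos ⟨hac, hint⟩]
    have hexpneg : expNeg (klDiv P Q) ≤ Real.exp (-K) := by
      rw [hkl, expNeg, if_neg ENNReal.ofReal_ne_top]
      refine Real.exp_le_exp.mpr (neg_le_neg ?_)
      rcases le_or_gt 0 K with h | h
      · rw [ENNReal.toReal_ofReal h]
      · rw [ENNReal.ofReal_of_nonpos h.le]
        simpa using h.le
    calc (1 / 2 : ℝ) * expNeg (klDiv P Q) ≤ (1 / 2 : ℝ) * Real.exp (-K) := by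
          have : (0:ℝ) ≤ 1/2 := by norm_num
          exact mul_le_mul_of_nonneg_left hexpneg this
      _ ≤ (1 / 2 : ℝ) * (2 * (a + d)) := by
          have : (0:ℝ) ≤ 1/2 := by norm_num
          exact mul_le_mul_of_nonneg_left hcore this
      _ = a + d := by ring
  · rw [klDiv, if_neg hc]
    simp only [expNeg, if_pos rfl, if_true, mul_zero]
    positivity
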